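/- Let α ∈ (0,1), let (x_1,y_1), …, (x_{n+1},y_{n+1}) be exchangeable random vectors in ℝ^p × ℝ, and partition {1,…,n} into nonempty sets I_1 and I_2. Let μ̂ : ℝ^p → ℝ be any measurable prediction rule constructed only from the data {(x_i, y_i) : i ∈ I_1}. Define R_i = |y_i − μ̂(x_i)| for i ∈ I_2, and for y ∈ ℝ let π(y) = (1 + #{i ∈ I_2 : R_i ≥ |y − μ̂(x_{n+1})|})/(|I_2| + 1) and C(x_{n+1}) = {y ∈ ℝ : π(y) > α}. Then P(y_{n+1} ∈ C(x_{n+1})) ≥ 1 − α. If, in addition, the absolute residuals |y_i − μ̂(x_i)| for i ∈ I_2 ∪ {n+1} have a continuous joint distribution, then P(y_{n+1} ∈ C(x_{n+1})) ≤ 1 − α + 1/(|I_2| + 1). -/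

import Mathlib

open MeasureTheory Filter Set

/-- A finite family of random elements is exchangeable if its joint distribution is
invariant under permutations of the indices. -/
def Exchangeable {Ω E : Type*} [MeasurableSpace Ω] [MeasurableSpace E]
    (μ : Measure Ω) {k : ℕ} (V : Fin k → Ω → E) : Prop :=
  ∀ σ : Equiv.Perm (Fin k),
    Measure.map (fun ω (i : Fin k) => V (σ i) ω) μ =
      Measure.map (fun ω (i : Fin k) => V i ω) μ

noncomputable section
open Classical in
/-- rank count: number of indices in `K` whose score is ≥ score of `j`. -/
def rcount {V : Type*} {ι : Type*} (K : Finset ι) (S : ι → V → ℝ) (j : ι) (v : V) : ℕ :=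
  (K.filter fun j' => S j v ≤ S j' v).card

open Classical in
lemma rcount_filter_le {V : Type*} {ι : Type*} (K : Finset ι) (S : ι → V → ℝ)
    (k : ℕ) (v : V) : (K.filter fun j => rcount K S j v ≤ k).card ≤ k := by
  by_contra h
  push_neg at h
  set F := K.filter fun j => rcount K S j v ≤ k with hF
  have hne : F.Nonempty := Finset.card_pos.mp (lt_of_le_of_lt (Nat.zero_le k) h)
  obtain ⟨j₀, hj₀F, hmin⟩ := F.exists_min_image (fun j => S j v) hne
  have hsub : F ⊆ K.filter fun j' => S j₀ v ≤ S j' v := by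
    intro j hj
    rw [hF, Finset.mem_filter] at hj
    rw [Finset.mem_filter]
    exact ⟨hj.1, hmin j (by rw [hF, Finset.mem_filter]; exact hj)⟩
  have h2 : F.card ≤ rcount K S j₀ v := Finset.card_le_card hsub
  rw [hF, Finset.mem_filter] at hj₀F
  have h1 : rcount K S j₀ v ≤ k := hj₀F.2
  omega

open Classical in
lemma rcount_injOn {V : Type*} {ι : Type*} (K : Finset ι) (S : ι → V → ℝ) (v : V)
    (hdist : ∀ j ∈ K, ∀ j' ∈ K, j ≠ j' → S j v ≠ S j' v) :
    ∀ j ∈ K, ∀ j' ∈ K, rcount K S j v = rcount K S j' v → j = j' := by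
  have key : ∀ j ∈ K, ∀ j' ∈ K, S j v < S j' v → rcount K S j' v < rcount K S j v := by
    intro j hj j' hj' hlt
    apply Finset.card_lt_card
    constructor
    · intro i hi
      rw [Finset.mem_filter] at hi ⊢
      exact ⟨hi.1, le_trans (le_of_lt hlt) hi.2⟩
    · intro hsub
      have : j ∈ K.filter fun i => S j' v ≤ S i v := hsub (by
        rw [Finset.mem_filter]; exact ⟨hj, le_refl _⟩)
      rw [Finset.mem_filter] at this
      exact absurd hlt (not_lt.mpr this.2)
  intro j hj j' hj' heq
  by_contra hne
  rcases lt_trichotomy (S j v) (S j' v) with h | h | h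
  · exact absurd heq (Nat.ne_of_gt (key j hj j' hj' h))
  · exact hdist j hj j' hj' hne h
  · exact absurd heq (Nat.ne_of_lt (key j' hj' j hj h))

open Classical in
lemma rcount_filter_ge {V : Type*} {ι : Type*} (K : Finset ι) (S : ι → V → ℝ) (k : ℕ) (v : V)
    (hdist : ∀ j ∈ K, ∀ j' ∈ K, j ≠ j' → S j v ≠ S j' v) :
    (K.filter fun j => k + 1 ≤ rcount K S j v).card ≤ K.card - k := by
  set F := K.filter fun j => k + 1 ≤ rcount K S j v with hF
  have himg : F.image (fun j => rcount K S j v) ⊆ Finset.Icc (k+1) K.card := by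
    intro t ht
    rw [Finset.mem_image] at ht
    obtain ⟨j, hj, rfl⟩ := ht
    rw [Finset.mem_Icc]
    exact ⟨(Finset.mem_filter.mp hj).2, Finset.card_filter_le _ _⟩
  have hcardimg : (F.image (fun j => rcount K S j v)).card = F.card := by
    apply Finset.card_image_of_injOn
    intro a ha b hb hab
    exact rcount_injOn K S v hdist a (Finset.mem_of_mem_filter _ ha)
      b (Finset.mem_of_mem_filter _ hb) hab
  calc F.card = (F.image (fun j => rcount K S j v)).card := hcardimg.symm
    _ ≤ (Finset.Icc (k+1) K.card).card := Finset.card_le_card himg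
    _ = K.card - k := by rw [Nat.card_Icc]; omega

end

noncomputable section
open Classical

lemma measurable_rcount {V : Type*} [MeasurableSpace V] {ι : Type*} (K : Finset ι)
    (S : ι → V → ℝ) (hS : ∀ j, Measurable (S j)) (j : ι) :
    Measurable (fun v => rcount K S j v) := by
  have : (fun v => rcount K S j v) =
      fun v => ∑ j' ∈ K, if S j v ≤ S j' v then 1 else 0 := by
    funext v
    rw [rcount, Finset.card_filter]
  rw [this]
  apply Finset.measurable_sum
  intro j' _
  exact Measurable.ite (measurableSet_le (hS j) (hS j')) measurable_const measurable_const

lemma sum_measure_le_of_count {V : Type*} [MeasurableSpace V] (ν : Measure V)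
    [IsProbabilityMeasure ν] {ι : Type*} (K : Finset ι) (A : ι → Set V)
    (hA : ∀ j ∈ K, MeasurableSet (A j)) (c : ℕ)
    (hcount : ∀ᵐ v ∂ν, ((K.filter fun j => v ∈ A j).card : ENNReal) ≤ c) :
    ∑ j ∈ K, ν (A j) ≤ c := by
  have h1 : ∀ j ∈ K, ν (A j) = ∫⁻ v, (A j).indicator 1 v ∂ν := by
    intro j hj
    exact (lintegral_indicator_one (hA j hj)).symm
  calc ∑ j ∈ K, ν (A j) = ∑ j ∈ K, ∫⁻ v, (A j).indicator 1 v ∂ν :=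
        Finset.sum_congr rfl h1
    _ = ∫⁻ v, ∑ j ∈ K, (A j).indicator 1 v ∂ν := by
        rw [lintegral_finset_sum]
        intro j hj
        exact (measurable_one.indicator (hA j hj))
    _ ≤ ∫⁻ v, (fun _ => (c : ENNReal)) v ∂ν := by
        apply lintegral_mono_ae
        filter_upwards [hcount] with v hv
        have : ∑ j ∈ K, (A j).indicator 1 v =
            ((K.filter fun j => v ∈ A j).card : ENNReal) := by
          rw [Finset.card_filter]
          push_cast
          apply Finset.sum_congr rfl
          intro j _
          by_cases h : v ∈ A j <;> simp [h, Set.indicator_apply]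
        rw [this]
        exact hv
    _ = c := by simp

end

noncomputable section
open Classical

lemma filter_card_perm {ι : Type*} (K : Finset ι) (σ : Equiv.Perm ι)
    (hσK : ∀ i, i ∈ K ↔ σ i ∈ K) (Q : ι → Prop) :
    (K.filter fun j' => Q (σ j')).card = (K.filter Q).card := by
  apply Finset.card_bij (fun a _ => σ a)
  · intro a ha
    rw [Finset.mem_filter] at ha ⊢
    exact ⟨(hσK a).mp ha.1, ha.2⟩
  · intro a _ b _ hab
    exact σ.injective hab
  · intro b hb
    rw [Finset.mem_filter] at hb
    refine ⟨σ.symm b, ?_, by simp⟩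
    rw [Finset.mem_filter]
    constructor
    · rw [hσK (σ.symm b)]
      simpa using hb.1
    · simpa using hb.2

lemma rank_measure_eq {V : Type*} [MeasurableSpace V] (ν : Measure V)
    {ι : Type*} [MeasurableSpace ι] (K : Finset ι) (S : ι → V → ℝ)
    (hS : ∀ j, Measurable (S j))
    (σ : Equiv.Perm ι) (T : V → V) (hT : Measurable T)
    (hTν : Measure.map T ν = ν) (hσK : ∀ i, i ∈ K ↔ σ i ∈ K)
    (hequiv : ∀ i v, S i (T v) = S (σ i) v) (j₀ : ι) (P : ℕ → Prop) :
    ν {v | P (rcount K S (σ j₀) v)} = ν {v | P (rcount K S j₀ v)} := by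
  have hms : MeasurableSet {v | P (rcount K S j₀ v)} :=
    (measurable_rcount K S hS j₀) trivial
  have hrc : ∀ v, rcount K S j₀ (T v) = rcount K S (σ j₀) v := by
    intro v
    unfold rcount
    simp only [hequiv]
    exact filter_card_perm K σ hσK (fun j' => S (σ j₀) v ≤ S j' v)
  calc ν {v | P (rcount K S (σ j₀) v)}
      = ν (T ⁻¹' {v | P (rcount K S j₀ v)}) := by
        congr 1
        ext v
        simp [Set.mem_preimage, hrc v]
    _ = (Measure.map T ν) {v | P (rcount K S j₀ v)} :=
        (Measure.map_apply hT hms).symm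
    _ = ν {v | P (rcount K S j₀ v)} := by rw [hTν]

lemma rank_bounds {V : Type*} [MeasurableSpace V] {ι : Type*} [MeasurableSpace ι]
    (ν : Measure V) [IsProbabilityMeasure ν]
    (K : Finset ι) (S : ι → V → ℝ) (hS : ∀ j, Measurable (S j))
    (j₀ : ι) (hj₀ : j₀ ∈ K)
    (hinv : ∀ j ∈ K, ∃ (σ : Equiv.Perm ι) (T : V → V), Measurable T ∧
        Measure.map T ν = ν ∧ σ j₀ = j ∧ (∀ i, i ∈ K ↔ σ i ∈ K) ∧
        ∀ i v, S i (T v) = S (σ i) v)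
    (k : ℕ) :
    (K.card : ENNReal) * ν {v | rcount K S j₀ v ≤ k} ≤ k ∧
    ((∀ᵐ v ∂ν, ∀ j ∈ K, ∀ j' ∈ K, j ≠ j' → S j v ≠ S j' v) →
      (K.card : ENNReal) * ν {v | k + 1 ≤ rcount K S j₀ v} ≤ (K.card - k : ℕ)) := by
  have key : ∀ (P : ℕ → Prop) (c : ℕ),
      (∀ᵐ v ∂ν, ((K.filter fun j => P (rcount K S j v)).card : ENNReal) ≤ c) →
      (K.card : ENNReal) * ν {v | P (rcount K S j₀ v)} ≤ c := by
    intro P c hcount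
    have heq : ∀ j ∈ K, ν {v | P (rcount K S j v)} = ν {v | P (rcount K S j₀ v)} := by
      intro j hj
      obtain ⟨σ, T, hT, hTν, hσj₀, hσK, hequiv⟩ := hinv j hj
      rw [← hσj₀]
      exact rank_measure_eq ν K S hS σ T hT hTν hσK hequiv j₀ P
    have hsum : ∑ j ∈ K, ν {v | P (rcount K S j v)} =
        (K.card : ENNReal) * ν {v | P (rcount K S j₀ v)} := by
      rw [Finset.sum_congr rfl heq, Finset.sum_const, nsmul_eq_mul]
    rw [← hsum]
    exact sum_measure_le_of_count ν K _
      (fun j _ => (measurable_rcount K S hS j) trivial) c hcount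
  constructor
  · apply key (fun t => t ≤ k) k
    filter_upwards with v
    exact_mod_cast (by convert rcount_filter_le K S k v using 3 : _)
  · intro hties
    apply key (fun t => k + 1 ≤ t) (K.card - k)
    filter_upwards [hties] with v hv
    exact_mod_cast (by convert rcount_filter_ge K S k v hv using 3 : _)

end

noncomputable section
open Classical

lemma conformal_core {V : Type*} [MeasurableSpace V] {ι : Type*} [MeasurableSpace ι]
    (ν : Measure V) [IsProbabilityMeasure ν]
    (K : Finset ι) (S : ι → V → ℝ) (hS : ∀ j, Measurable (S j))
    (j₀ : ι) (hj₀ : j₀ ∈ K)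
    (hinv : ∀ j ∈ K, ∃ (σ : Equiv.Perm ι) (T : V → V), Measurable T ∧
        Measure.map T ν = ν ∧ σ j₀ = j ∧ (∀ i, i ∈ K ↔ σ i ∈ K) ∧
        ∀ i v, S i (T v) = S (σ i) v)
    (α : ℝ) (hα0 : 0 < α) (hα1 : α < 1) (m : ℕ) (hm : K.card = m) (hmpos : 0 < m) :
    ENNReal.ofReal (1 - α) ≤ ν {v | ⌊α * m⌋₊ + 1 ≤ rcount K S j₀ v} ∧
    ((∀ᵐ v ∂ν, ∀ j ∈ K, ∀ j' ∈ K, j ≠ j' → S j v ≠ S j' v) →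
      ν {v | ⌊α * m⌋₊ + 1 ≤ rcount K S j₀ v} ≤ ENNReal.ofReal (1 - α + 1 / m)) := by
  set k : ℕ := ⌊α * m⌋₊ with hk
  obtain ⟨h1, h2⟩ := rank_bounds ν K S hS j₀ hj₀ hinv k
  rw [hm] at h1 h2
  have hmR : (0 : ℝ) < m := Nat.cast_pos.mpr hmpos
  have hαm0 : (0 : ℝ) ≤ α * m := le_of_lt (mul_pos hα0 hmR)
  have hkle : (k : ℝ) ≤ α * m := Nat.floor_le hαm0
  have hklt : k < m := by
    have : α * m < m := by
      nlinarith
    have := lt_of_le_of_lt hkle this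
    exact_mod_cast this
  have hm0 : (m : ENNReal) ≠ 0 := by exact_mod_cast hmpos.ne'
  have hmtop : (m : ENNReal) ≠ ⊤ := ENNReal.natCast_ne_top m
  have hmsA : MeasurableSet {v | rcount K S j₀ v ≤ k} :=
    (measurable_rcount K S hS j₀) (show MeasurableSet {t : ℕ | t ≤ k} from trivial)
  have hcompl : {v | k + 1 ≤ rcount K S j₀ v} = {v | rcount K S j₀ v ≤ k}ᶜ := by
    ext v; simp [Set.mem_compl_iff]
  constructor
  · -- lower bound
    have hνA : ν {v | rcount K S j₀ v ≤ k} ≤ ENNReal.ofReal α := by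
      have hdiv : ν {v | rcount K S j₀ v ≤ k} ≤ (k : ENNReal) / m := by
        rw [ENNReal.le_div_iff_mul_le (Or.inl hm0) (Or.inl hmtop), mul_comm]
        exact h1
      refine le_trans hdiv ?_
      rw [ENNReal.div_le_iff hm0 hmtop]
      calc (k : ENNReal) = ENNReal.ofReal (k : ℝ) := (ENNReal.ofReal_natCast k).symm
        _ ≤ ENNReal.ofReal (α * m) := ENNReal.ofReal_le_ofReal hkle
        _ = ENNReal.ofReal α * ENNReal.ofReal (m : ℝ) :=
            ENNReal.ofReal_mul (le_of_lt hα0)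
        _ = ENNReal.ofReal α * m := by rw [ENNReal.ofReal_natCast]
    rw [hcompl, prob_compl_eq_one_sub hmsA]
    calc ENNReal.ofReal (1 - α) = 1 - ENNReal.ofReal α := by
          rw [ENNReal.ofReal_sub 1 (le_of_lt hα0), ENNReal.ofReal_one]
      _ ≤ 1 - ν {v | rcount K S j₀ v ≤ k} := tsub_le_tsub_left hνA 1
  · -- upper bound
    intro hties
    have h2' := h2 hties
    have hdiv : ν {v | k + 1 ≤ rcount K S j₀ v} ≤ ((m - k : ℕ) : ENNReal) / m := by
      rw [ENNReal.le_div_iff_mul_le (Or.inl hm0) (Or.inl hmtop), mul_comm]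
      exact h2'
    refine le_trans hdiv ?_
    rw [ENNReal.div_le_iff hm0 hmtop]
    have htarget0 : (0 : ℝ) ≤ 1 - α + 1 / m := by
      have : (0:ℝ) < 1 / m := by positivity
      linarith
    calc ((m - k : ℕ) : ENNReal) = ENNReal.ofReal ((m - k : ℕ) : ℝ) :=
          (ENNReal.ofReal_natCast _).symm
      _ ≤ ENNReal.ofReal ((1 - α + 1 / m) * m) := by
          apply ENNReal.ofReal_le_ofReal
          rw [Nat.cast_sub (le_of_lt hklt)]
          have hfloor : α * m < k + 1 := Nat.lt_floor_add_one (α * m)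
          have hexp : (1 - α + 1 / m) * m = m - α * m + 1 := by
            field_simp
          rw [hexp]
          linarith
      _ = ENNReal.ofReal (1 - α + 1 / m) * ENNReal.ofReal (m : ℝ) :=
          ENNReal.ofReal_mul htarget0
      _ = ENNReal.ofReal (1 - α + 1 / m) * m := by rw [ENNReal.ofReal_natCast]

end

noncomputable section
open Classical

lemma natcard_subtype {γ : Type*} [Fintype γ] (s : Finset γ) (P : γ → Prop) :
    Nat.card {i : {i // i ∈ s} // P i.1} = (s.filter P).card := by
  rw [Nat.card_eq_fintype_card,
    Fintype.card_congr (Equiv.subtypeSubtypeEquivSubtypeInter (· ∈ s) P),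
    Fintype.card_subtype]
  congr 1
  ext x
  simp

lemma swap_mem_iff' {ι : Type*} [DecidableEq ι] (K : Finset ι) {a b : ι}
    (ha : a ∈ K) (hb : b ∈ K) (i : ι) : i ∈ K ↔ Equiv.swap a b i ∈ K := by
  rcases eq_or_ne i a with rfl | hia
  · simp [Equiv.swap_apply_left, ha, hb]
  rcases eq_or_ne i b with rfl | hib
  · simp [Equiv.swap_apply_right, ha, hb]
  · rw [Equiv.swap_apply_of_ne_of_ne hia hib]

end

/-- validity of the split-sample conformal prediction interval.
The data `D i = (x_i, y_i)`, `i = 1, …, n+1`, are exchangeable; `{1,…,n}` is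
partitioned into nonempty `I₁` (training) and `I₂` (calibration); `μhat` is any
measurable prediction rule built from the training data only.  With conformity
scores `R_i = |y_i - μhat(x_i)|` for `i ∈ I₂` and p-value
`π(y) = (1 + #{i ∈ I₂ : R_i ≥ |y - μhat(x_{n+1})|})/(|I₂|+1)`, the set
`C(x_{n+1}) = {y : π(y) > α}` covers `y_{n+1}` with probability at least `1-α`,
and at most `1 - α + 1/(|I₂|+1)` when the absolute residuals for `i ∈ I₂ ∪ {n+1}`
have a continuous (tie-free) joint distribution. -/
theorem split_conformal_validity
    {Ω : Type*} [MeasurableSpace Ω] (μ : Measure Ω) [IsProbabilityMeasure μ]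
    (n p : ℕ)
    (D : Fin (n + 1) → Ω → (Fin p → ℝ) × ℝ)
    (hDmeas : ∀ i, Measurable (D i))
    (hexch : Exchangeable μ D)
    (I₁ I₂ : Finset (Fin n)) (hI₁ : I₁.Nonempty) (hI₂ : I₂.Nonempty)
    (hdisj : Disjoint I₁ I₂) (hunion : I₁ ∪ I₂ = Finset.univ)
    (μhat : ({i : Fin n // i ∈ I₁} → (Fin p → ℝ) × ℝ) → (Fin p → ℝ) → ℝ)
    (hμmeas : Measurable (Function.uncurry μhat))
    (α : ℝ) (hα : α ∈ Set.Ioo (0 : ℝ) 1)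
    (train : Ω → {i : Fin n // i ∈ I₁} → (Fin p → ℝ) × ℝ)
    (htrain : ∀ ω j, train ω j = D j.1.castSucc ω)
    (Rres : Fin n → Ω → ℝ)
    (hRres : ∀ i ω, Rres i ω =
      |(D i.castSucc ω).2 - μhat (train ω) ((D i.castSucc ω).1)|)
    (πv : ℝ → Ω → ℝ)
    (hπ : ∀ y ω, πv y ω =
      (1 + (Nat.card {i : {i : Fin n // i ∈ I₂} //
        |y - μhat (train ω) ((D (Fin.last n) ω).1)| ≤ Rres i.1 ω} : ℝ)) /
        (I₂.card + 1)) :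
    ENNReal.ofReal (1 - α) ≤ μ {ω | α < πv ((D (Fin.last n) ω).2) ω} ∧
      ((∀ i j : Fin n, i ∈ I₂ → j ∈ I₂ → i ≠ j →
          μ {ω | Rres i ω = Rres j ω} = 0) →
        (∀ i : Fin n, i ∈ I₂ →
          μ {ω | Rres i ω =
            |(D (Fin.last n) ω).2 - μhat (train ω) ((D (Fin.last n) ω).1)|} = 0) →
        μ {ω | α < πv ((D (Fin.last n) ω).2) ω} ≤
          ENNReal.ofReal (1 - α + 1 / (I₂.card + 1))) := by
  classical
  obtain ⟨hα0, hα1⟩ := hα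
  have hdata : Measurable (fun ω (i : Fin (n+1)) => D i ω) :=
    measurable_pi_lambda _ hDmeas
  set data : Ω → (Fin (n+1) → (Fin p → ℝ) × ℝ) := fun ω i => D i ω with hdataDef
  set ν : Measure (Fin (n+1) → (Fin p → ℝ) × ℝ) := Measure.map data μ with hνdef
  haveI : IsProbabilityMeasure ν := Measure.isProbabilityMeasure_map hdata.aemeasurable
  set tr : (Fin (n+1) → (Fin p → ℝ) × ℝ) → ({i : Fin n // i ∈ I₁} → (Fin p → ℝ) × ℝ) :=
    fun v j => v j.1.castSucc with htrdef
  have htrmeas : Measurable tr := measurable_pi_lambda _ (fun j => measurable_pi_apply _)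
  set S : Fin (n+1) → (Fin (n+1) → (Fin p → ℝ) × ℝ) → ℝ :=
    fun j v => |(v j).2 - μhat (tr v) (v j).1| with hSdef
  have hSmeas : ∀ j, Measurable (S j) := by
    intro j
    apply Measurable.abs
    apply Measurable.sub
    · exact measurable_snd.comp (measurable_pi_apply j)
    · exact hμmeas.comp (htrmeas.prodMk (measurable_fst.comp (measurable_pi_apply j)))
  set K : Finset (Fin (n+1)) := I₂.image Fin.castSucc ∪ {Fin.last n} with hKdef
  have hlastK : Fin.last n ∈ K := Finset.mem_union_right _ (Finset.mem_singleton_self _)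
  have hlast_ne : ∀ i : Fin n, Fin.castSucc i ≠ Fin.last n :=
    fun i => (Fin.castSucc_lt_last i).ne
  have hlast_notin : Fin.last n ∉ I₂.image Fin.castSucc := by
    simp only [Finset.mem_image, not_exists]
    intro i
    intro h
    exact absurd h.2 (hlast_ne i)
  have hKcard : K.card = I₂.card + 1 := by
    rw [hKdef, Finset.card_union_of_disjoint
      (Finset.disjoint_singleton_right.mpr hlast_notin),
      Finset.card_image_of_injective _ (Fin.castSucc_injective n), Finset.card_singleton]
  have hKmem : ∀ j ∈ K, j = Fin.last n ∨ ∃ i ∈ I₂, Fin.castSucc i = j := by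
    intro j hj
    rw [hKdef, Finset.mem_union, Finset.mem_singleton, Finset.mem_image] at hj
    tauto
  -- invariance under swaps
  have hinv : ∀ j ∈ K, ∃ (σ : Equiv.Perm (Fin (n+1)))
      (T : (Fin (n+1) → (Fin p → ℝ) × ℝ) → (Fin (n+1) → (Fin p → ℝ) × ℝ)),
      Measurable T ∧ Measure.map T ν = ν ∧ σ (Fin.last n) = j ∧
      (∀ i, i ∈ K ↔ σ i ∈ K) ∧ ∀ i v, S i (T v) = S (σ i) v := by
    intro j hj
    refine ⟨Equiv.swap (Fin.last n) j, fun v i => v (Equiv.swap (Fin.last n) j i),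
      measurable_pi_lambda _ (fun i => measurable_pi_apply _), ?_,
      Equiv.swap_apply_left _ _, swap_mem_iff' K hlastK hj, ?_⟩
    · rw [hνdef, Measure.map_map (measurable_pi_lambda _ fun i => measurable_pi_apply _)
        hdata]
      exact hexch (Equiv.swap (Fin.last n) j)
    · have hfix : ∀ i : Fin n, i ∈ I₁ → Equiv.swap (Fin.last n) j i.castSucc = i.castSucc := by
        intro i hi
        apply Equiv.swap_apply_of_ne_of_ne (hlast_ne i)
        rcases hKmem j hj with rfl | ⟨i₂, hi₂, rfl⟩
        · exact hlast_ne i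
        · intro h
          have hii : i = i₂ := Fin.castSucc_injective n h
          subst hii
          exact (Finset.disjoint_left.mp hdisj hi) hi₂
      intro i v
      have htrT : tr (fun i' => v (Equiv.swap (Fin.last n) j i')) = tr v := by
        funext j'
        simp only [htrdef]
        rw [hfix j'.1 j'.2]
      simp only [hSdef, htrT]
  -- the constants
  set m : ℕ := I₂.card + 1 with hmdef
  have hmpos : 0 < m := by omega
  have hmR : (0 : ℝ) < m := Nat.cast_pos.mpr hmpos
  set k : ℕ := ⌊α * (m : ℝ)⌋₊ with hkdef
  have hαm0 : (0 : ℝ) ≤ α * m := le_of_lt (mul_pos hα0 hmR)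
  -- rcount at last index
  have hrc : ∀ v, rcount K S (Fin.last n) v =
      (I₂.filter fun i => S (Fin.last n) v ≤ S i.castSucc v).card + 1 := by
    intro v
    unfold rcount
    rw [hKdef, Finset.filter_union,
      Finset.card_union_of_disjoint (Finset.disjoint_filter_filter
        (Finset.disjoint_singleton_right.mpr hlast_notin)),
      Finset.filter_image, Finset.card_image_of_injective _ (Fin.castSucc_injective n),
      Finset.filter_singleton, if_pos (le_refl (S (Fin.last n) v)), Finset.card_singleton]
  -- translate π to rcount
  have htr' : ∀ ω, train ω = tr (data ω) := by
    intro ω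
    funext j
    rw [htrain]
  have hSlast : ∀ ω, |(D (Fin.last n) ω).2 - μhat (train ω) ((D (Fin.last n) ω).1)| =
      S (Fin.last n) (data ω) := by
    intro ω
    simp only [hSdef, htr' ω]
    rfl
  have hRres' : ∀ i ω, Rres i ω = S i.castSucc (data ω) := by
    intro i ω
    rw [hRres]
    simp only [hSdef, htr' ω]
    rfl
  have hπeq : ∀ ω, πv ((D (Fin.last n) ω).2) ω =
      (rcount K S (Fin.last n) (data ω) : ℝ) / m := by
    intro ω
    rw [hπ, natcard_subtype I₂
      (fun i => |(D (Fin.last n) ω).2 - μhat (train ω) ((D (Fin.last n) ω).1)| ≤ Rres i ω),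
      hrc]
    have hfe : (I₂.filter fun i =>
        |(D (Fin.last n) ω).2 - μhat (train ω) ((D (Fin.last n) ω).1)| ≤ Rres i ω) =
        (I₂.filter fun i => S (Fin.last n) (data ω) ≤ S i.castSucc (data ω)) := by
      apply Finset.filter_congr
      intro i _
      rw [hSlast, hRres']
    rw [hfe]
    push_cast
    ring_nf
    rw [hmdef]
    push_cast
    ring
  -- event identification
  have hmsB : MeasurableSet {v | k + 1 ≤ rcount K S (Fin.last n) v} :=
    (measurable_rcount K S hSmeas (Fin.last n))
      (show MeasurableSet {t : ℕ | k + 1 ≤ t} from trivial)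
  have hμE : μ {ω | α < πv ((D (Fin.last n) ω).2) ω} =
      ν {v | k + 1 ≤ rcount K S (Fin.last n) v} := by
    rw [hνdef, Measure.map_apply hdata hmsB]
    congr 1
    ext ω
    simp only [Set.mem_setOf_eq, Set.mem_preimage]
    rw [hπeq ω, lt_div_iff₀ hmR]
    constructor
    · intro h
      have := (Nat.floor_lt hαm0).mpr h
      omega
    · intro h
      have h1 : α * m < (k : ℝ) + 1 := Nat.lt_floor_add_one (α * (m : ℝ))
      have h2 : ((k : ℝ) + 1) ≤ (rcount K S (Fin.last n) (data ω) : ℝ) := by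
        exact_mod_cast h
      linarith
  obtain ⟨hc1, hc2⟩ := conformal_core ν K S hSmeas (Fin.last n) hlastK hinv α hα0 hα1 m
    (by rw [hKcard]) hmpos
  constructor
  · rw [hμE]
    exact hc1
  · intro hties1 hties2
    have hnull : ∀ j ∈ K, ∀ j' ∈ K, j ≠ j' → ν {v | S j v = S j' v} = 0 := by
      intro j hj j' hj' hne
      have hmse : MeasurableSet {v | S j v = S j' v} :=
        measurableSet_eq_fun (hSmeas j) (hSmeas j')
      rw [hνdef, Measure.map_apply hdata hmse]
      rcases hKmem j hj with rfl | ⟨i, hi, rfl⟩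
      · rcases hKmem j' hj' with rfl | ⟨i', hi', rfl⟩
        · exact absurd rfl hne
        · have h0 := hties2 i' hi'
          have hset : (data ⁻¹' {v | S (Fin.last n) v = S i'.castSucc v}) =
              {ω | Rres i' ω =
                |(D (Fin.last n) ω).2 - μhat (train ω) ((D (Fin.last n) ω).1)|} := by
            ext ω
            simp only [Set.mem_preimage, Set.mem_setOf_eq]
            rw [hRres', hSlast]
            exact eq_comm
          rw [hset]
          exact h0
      · rcases hKmem j' hj' with rfl | ⟨i', hi', rfl⟩
        · have h0 := hties2 i hi
          have hset : (data ⁻¹' {v | S i.castSucc v = S (Fin.last n) v}) =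
              {ω | Rres i ω =
                |(D (Fin.last n) ω).2 - μhat (train ω) ((D (Fin.last n) ω).1)|} := by
            ext ω
            simp only [Set.mem_preimage, Set.mem_setOf_eq]
            rw [hRres', hSlast]
          rw [hset]
          exact h0
        · have hii : i ≠ i' := by
            intro h
            exact hne (by rw [h])
          have h0 := hties1 i i' hi hi' hii
          have hset : (data ⁻¹' {v | S i.castSucc v = S i'.castSucc v}) =
              {ω | Rres i ω = Rres i' ω} := by
            ext ω
            simp only [Set.mem_preimage, Set.mem_setOf_eq]
            rw [hRres', hRres']
          rw [hset]
          exact h0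
    have hae : ∀ᵐ v ∂ν, ∀ j ∈ K, ∀ j' ∈ K, j ≠ j' → S j v ≠ S j' v := by
      rw [Filter.eventually_all_finset]
      intro j hj
      rw [Filter.eventually_all_finset]
      intro j' hj'
      by_cases h : j = j'
      · filter_upwards with v hne
        exact absurd h hne
      · have h0 := hnull j hj j' hj' h
        have h1 : ∀ᵐ v ∂ν, v ∉ {v | S j v = S j' v} :=
          (measure_eq_zero_iff_ae_notMem (μ := ν)).mp h0
        filter_upwards [h1] with v hv _
        exact hv
    rw [hμE]
    refine le_trans (hc2 hae) ?_
    have hcast : ((m : ℕ) : ℝ) = (I₂.card : ℝ) + 1 := by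
      rw [hmdef]
      push_cast
      ring
    rw [hcast]
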